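/- Let $p$ be analytic and non-vanishing in the unit disc $\mathbb{D}$ with $p(0)=1$. If $\left|\frac{z p'(z)}{p(z)^2} - 1 + 1\right| = \left|\frac{z p'(z)}{p(z)^2}\right| < \frac{1}{2}\operatorname{sech} 1 \tanh 1$ for all $z \in \mathbb{D}$ (equivalently $|1 + zp'(z)/p(z)^2 - 1| < \frac{\sinh 1}{2\cosh^2 1}$), then $p(z) \prec \cosh\sqrt{z}$. -/

import Mathlib

open Metric

/-- `cosh √z` as a power series. -/
noncomputable def coshSqrt (z : ℂ) : ℂ := ∑' n : ℕ, z ^ n / (Nat.factorial (2 * n) : ℂ)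

/-- `f ≺ g` : subordination on the unit disc. -/
def Subordinate (f g : ℂ → ℂ) : Prop :=
  ∃ w : ℂ → ℂ, AnalyticOn ℂ w (ball (0:ℂ) 1) ∧ w 0 = 0 ∧
    Set.MapsTo w (ball (0:ℂ) 1) (ball (0:ℂ) 1) ∧
    ∀ z ∈ ball (0:ℂ) 1, f z = g (w z)

namespace SubAux
open Complex



/-- principal square root via exp/log -/
noncomputable def sq2 (a : ℂ) : ℂ := Complex.exp (((1/2 : ℝ) : ℂ) * Complex.log a)

/-- square root, mapping `0` to `0`. -/
noncomputable def sqv (a : ℂ) : ℂ := if a = 0 then 0 else sq2 a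

lemma sq2_sq {a : ℂ} (ha : a ≠ 0) : sq2 a ^ 2 = a := by
  rw [sq, sq2, ← Complex.exp_add]
  have : ((1/2 : ℝ) : ℂ) * Complex.log a + ((1/2 : ℝ) : ℂ) * Complex.log a = Complex.log a := by
    push_cast; ring
  rw [this, Complex.exp_log ha]

lemma sqv_sq (a : ℂ) : sqv a ^ 2 = a := by
  unfold sqv
  split_ifs with h
  · simp [h]
  · exact sq2_sq h

lemma sq2_one : sq2 1 = 1 := by simp [sq2]

lemma norm_sq2 {a : ℂ} (ha : a ≠ 0) : ‖sq2 a‖ = Real.sqrt ‖a‖ := by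
  have hpos : (0:ℝ) < ‖a‖ := norm_pos_iff.mpr ha
  rw [sq2, Complex.norm_exp]
  have h1 : ((((1:ℝ)/2 : ℝ) : ℂ) * Complex.log a).re = (1/2 : ℝ) * Real.log ‖a‖ := by
    rw [Complex.re_ofReal_mul, Complex.log_re]
  rw [h1, Real.sqrt_eq_rpow, Real.rpow_def_of_pos hpos]
  rw [mul_comm]

lemma norm_sqv (a : ℂ) : ‖sqv a‖ = Real.sqrt ‖a‖ := by
  unfold sqv
  split_ifs with h
  · simp [h]
  · exact norm_sq2 h

lemma re_sq2_nonneg (a : ℂ) : 0 ≤ (sq2 a).re := by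
  rw [sq2, Complex.exp_re]
  have him : ((((1:ℝ)/2 : ℝ) : ℂ) * Complex.log a).im = (1/2) * Complex.arg a := by
    rw [Complex.im_ofReal_mul, Complex.log_im]
  rw [him]
  have := Complex.abs_arg_le_pi a
  have hc : 0 ≤ Real.cos (1/2 * Complex.arg a) := by
    apply Real.cos_nonneg_of_mem_Icc
    rw [abs_le] at this
    constructor
    · linarith [this.1]
    · linarith [this.2]
  positivity



lemma mem_slitPlane_of_near_one {ζ : ℂ} (h : ‖ζ - 1‖ < 1) : ζ ∈ Complex.slitPlane := by
  refine Complex.mem_slitPlane_iff.mpr (Or.inl ?_)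
  have h1 : |(ζ - 1).re| ≤ ‖ζ - 1‖ := Complex.abs_re_le_norm _
  have h2 : (ζ - 1).re = ζ.re - 1 := by simp
  rw [h2, abs_le] at h1
  linarith [h1.1]

lemma norm_log_le {ζ : ℂ} {d : ℝ} (h : ‖ζ - 1‖ ≤ d) (hd : d < 1) : ‖Complex.log ζ‖ ≤ d / (1 - d) := by
  have hd0 : 0 ≤ d := le_trans (norm_nonneg _) h
  set F : ℝ → ℂ := fun t => Complex.log (1 + (t:ℂ) * (ζ - 1)) with hF
  have hmem : ∀ t : ℝ, t ∈ Set.Icc (0:ℝ) 1 → (1 + (t:ℂ) * (ζ - 1)) ∈ Complex.slitPlane := by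
    intro t ht
    apply mem_slitPlane_of_near_one
    have : ‖(1 + (t:ℂ) * (ζ - 1)) - 1‖ = |t| * ‖ζ - 1‖ := by
      simp [norm_mul, Complex.norm_real]
    rw [this, _root_.abs_of_nonneg ht.1]
    calc t * ‖ζ - 1‖ ≤ 1 * d := by
          apply mul_le_mul ht.2 h (norm_nonneg _) zero_le_one
      _ < 1 := by linarith
  have hderiv : ∀ t : ℝ, t ∈ Set.Icc (0:ℝ) 1 →
      HasDerivWithinAt F ((1 + (t:ℂ) * (ζ - 1))⁻¹ * (ζ - 1)) (Set.Icc (0:ℝ) 1) t := by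
    intro t ht
    have inner : HasDerivAt (fun w : ℂ => 1 + w * (ζ - 1)) (ζ - 1) (t:ℂ) := by
      simpa using ((hasDerivAt_id (t:ℂ)).mul_const (ζ - 1)).const_add 1
    have hlog : HasDerivAt Complex.log (1 + (t:ℂ) * (ζ - 1))⁻¹ (1 + (t:ℂ) * (ζ - 1)) :=
      Complex.hasDerivAt_log (hmem t ht)
    have := (hlog.comp (t:ℂ) inner).comp_ofReal
    exact this.hasDerivWithinAt
  have hbound : ∀ t : ℝ, t ∈ Set.Ico (0:ℝ) 1 →
      ‖(1 + (t:ℂ) * (ζ - 1))⁻¹ * (ζ - 1)‖ ≤ d / (1 - d) := by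
    intro t ht
    rw [norm_mul, norm_inv]
    have hlow : 1 - d ≤ ‖1 + (t:ℂ) * (ζ - 1)‖ := by
      have h1 : ‖(t:ℂ) * (ζ - 1)‖ ≤ d := by
        rw [norm_mul, Complex.norm_real, Real.norm_eq_abs, _root_.abs_of_nonneg ht.1]
        calc t * ‖ζ - 1‖ ≤ 1 * d := mul_le_mul ht.2.le h (norm_nonneg _) zero_le_one
          _ = d := one_mul d
      have h2 := norm_sub_norm_le (1:ℂ) (1 + (t:ℂ) * (ζ - 1))
      have h3 : (1:ℂ) - (1 + (t:ℂ) * (ζ - 1)) = -((t:ℂ) * (ζ - 1)) := by ring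
      rw [h3, norm_neg, norm_one] at h2
      linarith
    have hpos : (0:ℝ) < 1 - d := by linarith
    have : ‖1 + (t:ℂ) * (ζ - 1)‖⁻¹ ≤ (1 - d)⁻¹ := by
      apply inv_anti₀ hpos hlow
    calc ‖1 + (t:ℂ) * (ζ - 1)‖⁻¹ * ‖ζ - 1‖ ≤ (1 - d)⁻¹ * d := by
          apply mul_le_mul this h (norm_nonneg _) (by positivity)
      _ = d / (1 - d) := by ring
  have := norm_image_sub_le_of_norm_deriv_le_segment' hderiv hbound 1 (Set.right_mem_Icc.mpr zero_le_one)
  have hF1 : F 1 = Complex.log ζ := by simp [hF]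
  have hF0 : F 0 = 0 := by simp [hF]
  rw [hF1, hF0, sub_zero] at this
  linarith

lemma coshSqrt_sq' (t : ℂ) :
    (∑' n : ℕ, (t^2) ^ n / (Nat.factorial (2 * n) : ℂ)) = Complex.cosh t := by
  have h := Complex.hasSum_cosh t
  have h2 : HasSum (fun n : ℕ => (t^2) ^ n / ((2 * n).factorial : ℂ)) (Complex.cosh t) := by
    convert h using 2 with n
    rw [← pow_mul]
  exact h2.tsum_eq

lemma cosh_two' (u : ℂ) : Complex.cosh (2 * u) = 2 * Complex.cosh u ^ 2 - 1 := by
  rw [Complex.cosh_two_mul, Complex.sinh_sq]; ring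

lemma sq2_near_one {a : ℂ} {r : ℝ} (h : ‖a - 1‖ ≤ r) (hr : r ≤ 1/3) :
    ‖sq2 a - 1‖ ≤ 0.58 * r := by
  have hr0 : 0 ≤ r := le_trans (norm_nonneg _) h
  have ha : a ≠ 0 := by
    intro h0
    rw [h0] at h
    simp only [zero_sub, norm_neg, norm_one] at h
    linarith
  set s := sq2 a with hs
  have hs2 : s ^ 2 = a := sq2_sq ha
  have key : ‖s - 1‖ * ‖s + 1‖ = ‖a - 1‖ := by
    rw [← norm_mul]
    congr 1
    linear_combination hs2
  have hre : 0 ≤ s.re := re_sq2_nonneg a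
  have hns : ‖s‖ ^ 2 = ‖a‖ := by rw [← hs2, norm_pow]
  have hna : 1 - r ≤ ‖a‖ := by
    have h2 := norm_sub_norm_le (1:ℂ) a
    have h3 : (1:ℂ) - a = -(a - 1) := by ring
    rw [h3, norm_neg, norm_one] at h2
    linarith
  have h1 : ‖s + 1‖ ^ 2 = ‖s‖ ^ 2 + 2 * s.re + 1 := by
    simp only [Complex.sq_norm]
    simp only [Complex.normSq_apply, Complex.add_re, Complex.add_im, Complex.one_re,
      Complex.one_im]
    ring
  have h2 : (1.29 : ℝ) ≤ ‖s + 1‖ := by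
    nlinarith [norm_nonneg (s + 1), h1, hns, hna]
  have p1 : ‖s - 1‖ ≤ 0.26 := by
    nlinarith [key, norm_nonneg (s - 1), h, hr]
  have h4 : (1.74 : ℝ) ≤ ‖s + 1‖ := by
    have h5 := norm_sub_norm_le (2:ℂ) (1 - s)
    have h6 : (2:ℂ) - (1 - s) = s + 1 := by ring
    rw [h6] at h5
    have h7 : ‖(2:ℂ)‖ = 2 := by norm_num
    have h8 : ‖(1:ℂ) - s‖ = ‖s - 1‖ := by rw [norm_sub_rev]
    rw [h7, h8] at h5
    linarith
  nlinarith [key, norm_nonneg (s - 1), h]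


noncomputable def S0 (f : ℂ → ℂ) (z : ℂ) : ℂ := sq2 ((f z + 1)/2)
noncomputable def S1 (f : ℂ → ℂ) (z : ℂ) : ℂ := sq2 ((1 + S0 f z)/2)
noncomputable def S2 (f : ℂ → ℂ) (z : ℂ) : ℂ := sq2 ((1 + S1 f z)/2)
noncomputable def S3 (f : ℂ → ℂ) (z : ℂ) : ℂ := sq2 ((1 + S2 f z)/2)
noncomputable def QQ (f : ℂ → ℂ) (z : ℂ) : ℂ :=
  (f z - 1) / (16 * (1 + S0 f z) * (1 + S1 f z) * (1 + S2 f z))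
noncomputable def GG (f : ℂ → ℂ) (z : ℂ) : ℂ := sqv (QQ f z) + S3 f z
noncomputable def WW (f : ℂ → ℂ) (z : ℂ) : ℂ := (16 * Complex.log (GG f z))^2
noncomputable def GM (f : ℂ → ℂ) (z : ℂ) : ℂ := Complex.I * sq2 (-QQ f z) + S3 f z
noncomputable def WM (f : ℂ → ℂ) (z : ℂ) : ℂ := (16 * Complex.log (GM f z))^2

lemma ne_zero_of_near_one {ζ : ℂ} (h : ‖ζ - 1‖ < 1) : ζ ≠ 0 := by
  intro h0
  rw [h0] at h
  simp only [zero_sub, norm_neg, norm_one] at h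
  linarith

lemma norm_two_sub {s : ℂ} {r : ℝ} (h : ‖s - 1‖ ≤ r) : 2 - r ≤ ‖1 + s‖ := by
  have h5 := norm_sub_norm_le (2:ℂ) (1 - s)
  have h6 : (2:ℂ) - (1 - s) = 1 + s := by ring
  have h8 : ‖(1:ℂ) - s‖ = ‖s - 1‖ := by rw [norm_sub_rev]
  rw [h6, h8] at h5
  have h7 : ‖(2:ℂ)‖ = 2 := by norm_num
  rw [h7] at h5
  linarith

lemma bounds {f : ℂ → ℂ} {z : ℂ} (h : ‖f z - 1‖ ≤ 1/3) :
    ‖S0 f z - 1‖ ≤ 0.0967 ∧ ‖S1 f z - 1‖ ≤ 0.02805 ∧ ‖S2 f z - 1‖ ≤ 0.00814 ∧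
      ‖S3 f z - 1‖ ≤ 0.00237 ∧ ‖QQ f z‖ ≤ 0.00281 := by
  have a0 : ‖(f z + 1)/2 - 1‖ ≤ 1/6 := by
    rw [show (f z + 1)/2 - 1 = (f z - 1)/2 from by ring, norm_div]
    have : ‖(2:ℂ)‖ = 2 := by norm_num
    rw [this]; linarith
  have b0 : ‖S0 f z - 1‖ ≤ 0.0967 := by
    have := sq2_near_one a0 (by norm_num)
    rw [S0]; linarith
  have a1 : ‖(1 + S0 f z)/2 - 1‖ ≤ 0.04835 := by
    rw [show (1 + S0 f z)/2 - 1 = (S0 f z - 1)/2 from by ring, norm_div]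
    have : ‖(2:ℂ)‖ = 2 := by norm_num
    rw [this]; linarith
  have b1 : ‖S1 f z - 1‖ ≤ 0.02805 := by
    have := sq2_near_one a1 (by norm_num)
    rw [S1]; linarith
  have a2 : ‖(1 + S1 f z)/2 - 1‖ ≤ 0.014025 := by
    rw [show (1 + S1 f z)/2 - 1 = (S1 f z - 1)/2 from by ring, norm_div]
    have : ‖(2:ℂ)‖ = 2 := by norm_num
    rw [this]; linarith
  have b2 : ‖S2 f z - 1‖ ≤ 0.00814 := by
    have := sq2_near_one a2 (by norm_num)
    rw [S2]; linarith
  have a3 : ‖(1 + S2 f z)/2 - 1‖ ≤ 0.00407 := by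
    rw [show (1 + S2 f z)/2 - 1 = (S2 f z - 1)/2 from by ring, norm_div]
    have : ‖(2:ℂ)‖ = 2 := by norm_num
    rw [this]; linarith
  have b3 : ‖S3 f z - 1‖ ≤ 0.00237 := by
    have := sq2_near_one a3 (by norm_num)
    rw [S3]; linarith
  have nA : (1.9033 : ℝ) ≤ ‖1 + S0 f z‖ := by have := norm_two_sub b0; linarith
  have nB : (1.97195 : ℝ) ≤ ‖1 + S1 f z‖ := by have := norm_two_sub b1; linarith
  have nC : (1.99186 : ℝ) ≤ ‖1 + S2 f z‖ := by have := norm_two_sub b2; linarith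
  have bq : ‖QQ f z‖ ≤ 0.00281 := by
    rw [QQ, norm_div, norm_mul, norm_mul, norm_mul]
    have h16 : ‖(16:ℂ)‖ = 16 := by norm_num
    rw [h16]
    have hD : (119 : ℝ) ≤ 16 * ‖1 + S0 f z‖ * ‖1 + S1 f z‖ * ‖1 + S2 f z‖ := by
      have p1 : (3.753:ℝ) ≤ ‖1 + S0 f z‖ * ‖1 + S1 f z‖ := by nlinarith [nA, nB]
      have p2 : (7.475:ℝ) ≤ ‖1 + S0 f z‖ * ‖1 + S1 f z‖ * ‖1 + S2 f z‖ := by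
        nlinarith [p1, nC]
      nlinarith [p2]
    have hD0 : (0:ℝ) < 16 * ‖1 + S0 f z‖ * ‖1 + S1 f z‖ * ‖1 + S2 f z‖ := by linarith
    calc ‖f z - 1‖ / (16 * ‖1 + S0 f z‖ * ‖1 + S1 f z‖ * ‖1 + S2 f z‖)
        ≤ (1/3) / 119 := by
          apply div_le_div₀ (by norm_num) h (by norm_num) hD
      _ ≤ 0.00281 := by norm_num
  exact ⟨b0, b1, b2, b3, bq⟩

lemma sq_eqs {f : ℂ → ℂ} {z : ℂ} (h : ‖f z - 1‖ ≤ 1/3) :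
    S0 f z ^ 2 = (f z + 1)/2 ∧ S1 f z ^ 2 = (1 + S0 f z)/2 ∧
      S2 f z ^ 2 = (1 + S1 f z)/2 ∧ S3 f z ^ 2 = (1 + S2 f z)/2 := by
  obtain ⟨b0, b1, b2, b3, bq⟩ := bounds h
  have a0 : ((f z + 1)/2 : ℂ) ≠ 0 := by
    apply ne_zero_of_near_one
    rw [show (f z + 1)/2 - 1 = (f z - 1)/2 from by ring, norm_div]
    have : ‖(2:ℂ)‖ = 2 := by norm_num
    rw [this]; linarith
  have a1 : ((1 + S0 f z)/2 : ℂ) ≠ 0 := by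
    apply ne_zero_of_near_one
    rw [show (1 + S0 f z)/2 - 1 = (S0 f z - 1)/2 from by ring, norm_div]
    have : ‖(2:ℂ)‖ = 2 := by norm_num
    rw [this]; linarith
  have a2 : ((1 + S1 f z)/2 : ℂ) ≠ 0 := by
    apply ne_zero_of_near_one
    rw [show (1 + S1 f z)/2 - 1 = (S1 f z - 1)/2 from by ring, norm_div]
    have : ‖(2:ℂ)‖ = 2 := by norm_num
    rw [this]; linarith
  have a3 : ((1 + S2 f z)/2 : ℂ) ≠ 0 := by
    apply ne_zero_of_near_one
    rw [show (1 + S2 f z)/2 - 1 = (S2 f z - 1)/2 from by ring, norm_div]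
    have : ‖(2:ℂ)‖ = 2 := by norm_num
    rw [this]; linarith
  exact ⟨sq2_sq a0, sq2_sq a1, sq2_sq a2, sq2_sq a3⟩

lemma key_eq {f : ℂ → ℂ} {z : ℂ} (h : ‖f z - 1‖ ≤ 1/3) :
    S3 f z ^ 2 - QQ f z = 1 := by
  obtain ⟨b0, b1, b2, b3, bq⟩ := bounds h
  obtain ⟨e0, e1, e2, e3⟩ := sq_eqs h
  have hA : (1 + S0 f z) ≠ 0 := by
    intro h0
    have := norm_two_sub b0
    rw [h0] at this; simp at this; linarith
  have hB : (1 + S1 f z) ≠ 0 := by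
    intro h0
    have := norm_two_sub b1
    rw [h0] at this; simp at this; linarith
  have hC : (1 + S2 f z) ≠ 0 := by
    intro h0
    have := norm_two_sub b2
    rw [h0] at this; simp at this; linarith
  have hD : (16 * (1 + S0 f z) * (1 + S1 f z) * (1 + S2 f z) : ℂ) ≠ 0 := by
    simp [hA, hB, hC]
  have claim : (S3 f z ^ 2 - 1) * (16 * (1 + S0 f z) * (1 + S1 f z) * (1 + S2 f z)) = f z - 1 := by
    linear_combination (16 * (1 + S0 f z) * (1 + S1 f z) * (1 + S2 f z)) * e3
      + (8 * (1 + S0 f z) * (1 + S1 f z)) * e2 + (4 * (1 + S0 f z)) * e1 + 2 * e0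
  have hq : QQ f z = S3 f z ^ 2 - 1 := by
    rw [QQ, div_eq_iff hD]
    linear_combination -claim
  rw [hq]; ring
lemma re_pos_of_near_one {ζ : ℂ} (h : ‖ζ - 1‖ < 1) : 0 < ζ.re := by
  have h1 : |(ζ - 1).re| ≤ ‖ζ - 1‖ := Complex.abs_re_le_norm _
  have h2 : (ζ - 1).re = ζ.re - 1 := by simp
  rw [h2, abs_le] at h1
  linarith [h1.1]

lemma norm_X_le {f : ℂ → ℂ} {z : ℂ} (h : ‖f z - 1‖ ≤ 1/3) : ‖sqv (QQ f z)‖ ≤ 0.05301 := by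
  obtain ⟨b0, b1, b2, b3, bq⟩ := bounds h
  rw [norm_sqv]
  have h1 : Real.sqrt ‖QQ f z‖ ≤ Real.sqrt 0.00281 := Real.sqrt_le_sqrt bq
  have h2 : Real.sqrt 0.00281 ≤ 0.05301 := by
    rw [Real.sqrt_le_iff]
    norm_num
  linarith

lemma norm_GG_sub_one {f : ℂ → ℂ} {z : ℂ} (h : ‖f z - 1‖ ≤ 1/3) : ‖GG f z - 1‖ ≤ 0.0554 := by
  obtain ⟨b0, b1, b2, b3, bq⟩ := bounds h
  have hX := norm_X_le h
  have : GG f z - 1 = sqv (QQ f z) + (S3 f z - 1) := by rw [GG]; ring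
  rw [this]
  calc ‖sqv (QQ f z) + (S3 f z - 1)‖ ≤ ‖sqv (QQ f z)‖ + ‖S3 f z - 1‖ := norm_add_le _ _
    _ ≤ 0.0554 := by linarith

lemma identity_eq {f : ℂ → ℂ} {z : ℂ} (h : ‖f z - 1‖ ≤ 1/3) :
    Complex.cosh (16 * Complex.log (GG f z)) = f z := by
  obtain ⟨e0, e1, e2, e3⟩ := sq_eqs h
  have k := key_eq h
  have hX : sqv (QQ f z) ^ 2 = QQ f z := sqv_sq _
  have hprod : GG f z * (S3 f z - sqv (QQ f z)) = 1 := by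
    rw [GG]; linear_combination k - hX
  have hGne : GG f z ≠ 0 := left_ne_zero_of_mul_eq_one hprod
  have hinv : S3 f z - sqv (QQ f z) = (GG f z)⁻¹ := eq_inv_of_mul_eq_one_right hprod
  have hcosh : Complex.cosh (Complex.log (GG f z)) = S3 f z := by
    have hdef : Complex.cosh (Complex.log (GG f z)) =
        (Complex.exp (Complex.log (GG f z)) + Complex.exp (-Complex.log (GG f z))) / 2 := rfl
    rw [hdef, Complex.exp_neg, Complex.exp_log hGne, ← hinv, GG]
    ring
  have t3 : (2:ℂ) * S3 f z ^ 2 - 1 = S2 f z := by linear_combination 2 * e3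
  have t2 : (2:ℂ) * S2 f z ^ 2 - 1 = S1 f z := by linear_combination 2 * e2
  have t1 : (2:ℂ) * S1 f z ^ 2 - 1 = S0 f z := by linear_combination 2 * e1
  have t0 : (2:ℂ) * S0 f z ^ 2 - 1 = f z := by linear_combination 2 * e0
  have h16 : (16 : ℂ) * Complex.log (GG f z) =
      2 * (2 * (2 * (2 * Complex.log (GG f z)))) := by ring
  rw [h16, cosh_two', cosh_two', cosh_two', cosh_two', hcosh, t3, t2, t1, t0]

lemma ww_eq_wm {f : ℂ → ℂ} {z : ℂ} (h : ‖f z - 1‖ ≤ 1/3) (hq : QQ f z ≠ 0) :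
    WW f z = WM f z := by
  obtain ⟨b0, b1, b2, b3, bq⟩ := bounds h
  have k := key_eq h
  have hsq : sqv (QQ f z) = sq2 (QQ f z) := if_neg hq
  have hX2 : sq2 (QQ f z) ^ 2 = QQ f z := sq2_sq hq
  have hXM2 : (Complex.I * sq2 (-QQ f z)) ^ 2 = QQ f z := by
    rw [mul_pow, Complex.I_sq, sq2_sq (neg_ne_zero.mpr hq)]
    ring
  have hcases : (sq2 (QQ f z) - Complex.I * sq2 (-QQ f z)) *
      (sq2 (QQ f z) + Complex.I * sq2 (-QQ f z)) = 0 := by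
    linear_combination hX2 - hXM2
  rcases mul_eq_zero.mp hcases with h1 | h1
  · have hXeq : sq2 (QQ f z) = Complex.I * sq2 (-QQ f z) := sub_eq_zero.mp h1
    rw [WW, WM, GG, GM, hsq, hXeq]
  · have hXm : Complex.I * sq2 (-QQ f z) = -sq2 (QQ f z) := by linear_combination h1
    have hXle : ‖sq2 (QQ f z)‖ ≤ 0.05301 := by
      have := norm_X_le h
      rwa [hsq] at this
    have hGG1 : ‖GG f z - 1‖ ≤ 0.0554 := norm_GG_sub_one h
    have hGM1 : ‖GM f z - 1‖ ≤ 0.0554 := by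
      have hrw : GM f z - 1 = -sq2 (QQ f z) + (S3 f z - 1) := by rw [GM, hXm]; ring
      rw [hrw]
      calc ‖-sq2 (QQ f z) + (S3 f z - 1)‖ ≤ ‖-sq2 (QQ f z)‖ + ‖S3 f z - 1‖ := norm_add_le _ _
        _ ≤ 0.0554 := by rw [norm_neg]; linarith
    have hGGre : 0 < (GG f z).re := re_pos_of_near_one (by linarith)
    have hGMre : 0 < (GM f z).re := re_pos_of_near_one (by linarith)
    have hGGne : GG f z ≠ 0 := ne_zero_of_near_one (by linarith)
    have hGMne : GM f z ≠ 0 := ne_zero_of_near_one (by linarith)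
    have hprod : GG f z * GM f z = 1 := by
      rw [GG, GM, hsq, hXm]
      linear_combination k - hX2
    have hargG : |Complex.arg (GG f z)| < Real.pi / 2 :=
      Complex.abs_arg_lt_pi_div_two_iff.mpr (Or.inl hGGre)
    have hargM : |Complex.arg (GM f z)| < Real.pi / 2 :=
      Complex.abs_arg_lt_pi_div_two_iff.mpr (Or.inl hGMre)
    have hmem : Complex.arg (GG f z) + Complex.arg (GM f z) ∈ Set.Ioc (-Real.pi) Real.pi := by
      rw [abs_lt] at hargG hargM
      constructor
      · linarith [hargG.1, hargM.1]
      · linarith [hargG.2, hargM.2]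
    have hlog : Complex.log (GG f z) + Complex.log (GM f z) = 0 := by
      have := (Complex.log_mul_eq_add_log_iff hGGne hGMne).mpr hmem
      rw [hprod, Complex.log_one] at this
      linear_combination -this
    rw [WW, WM]
    have : Complex.log (GM f z) = -Complex.log (GG f z) := by linear_combination hlog
    rw [this]
    ring
lemma norm_GM_sub_one {f : ℂ → ℂ} {z : ℂ} (h : ‖f z - 1‖ ≤ 1/3) (hq : QQ f z ≠ 0) :
    ‖GM f z - 1‖ ≤ 0.0554 := by
  obtain ⟨b0, b1, b2, b3, bq⟩ := bounds h
  have hXle : ‖Complex.I * sq2 (-QQ f z)‖ ≤ 0.05301 := by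
    rw [norm_mul, Complex.norm_I, one_mul, norm_sq2 (neg_ne_zero.mpr hq), norm_neg]
    have h1 : Real.sqrt ‖QQ f z‖ ≤ Real.sqrt 0.00281 := Real.sqrt_le_sqrt bq
    have h2 : Real.sqrt 0.00281 ≤ 0.05301 := by
      rw [Real.sqrt_le_iff]; norm_num
    linarith
  have hrw : GM f z - 1 = Complex.I * sq2 (-QQ f z) + (S3 f z - 1) := by rw [GM]; ring
  rw [hrw]
  calc ‖Complex.I * sq2 (-QQ f z) + (S3 f z - 1)‖
      ≤ ‖Complex.I * sq2 (-QQ f z)‖ + ‖S3 f z - 1‖ := norm_add_le _ _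
    _ ≤ 0.0554 := by linarith

lemma norm_WW_le {f : ℂ → ℂ} {z : ℂ} (h : ‖f z - 1‖ ≤ 1/3) : ‖WW f z‖ ≤ 0.89 := by
  have hGG1 : ‖GG f z - 1‖ ≤ 0.0554 := norm_GG_sub_one h
  have hlog : ‖Complex.log (GG f z)‖ ≤ 0.0554 / (1 - 0.0554) :=
    norm_log_le hGG1 (by norm_num)
  have : ‖WW f z‖ = (16 * ‖Complex.log (GG f z)‖)^2 := by
    rw [WW, norm_pow, norm_mul]
    norm_num
  rw [this]
  nlinarith [norm_nonneg (Complex.log (GG f z))]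

lemma mem_ball_WW {f : ℂ → ℂ} {z : ℂ} (h : ‖f z - 1‖ ≤ 1/3) : WW f z ∈ ball (0:ℂ) 1 := by
  rw [mem_ball, dist_zero_right]
  have := norm_WW_le h
  linarith

lemma diffAt_sq2 {h : ℂ → ℂ} {z : ℂ} (hd : DifferentiableAt ℂ h z)
    (hm : h z ∈ Complex.slitPlane) : DifferentiableAt ℂ (fun w => sq2 (h w)) z := by
  simp only [sq2]
  exact (((Complex.differentiableAt_log hm).comp z hd).const_mul _).cexp

lemma neg_mem_slitPlane {a : ℂ} (h0 : a ≠ 0) (h : a ∉ Complex.slitPlane) :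
    -a ∈ Complex.slitPlane := by
  rw [Complex.mem_slitPlane_iff] at h ⊢
  push_neg at h
  rcases h with ⟨hre, him⟩
  left
  simp only [Complex.neg_re]
  rcases lt_or_eq_of_le hre with h1 | h1
  · linarith
  · exfalso; exact h0 (Complex.ext h1 him)

lemma slit_facts {f : ℂ → ℂ} {z : ℂ} (h : ‖f z - 1‖ ≤ 1/3) :
    (f z + 1)/2 ∈ Complex.slitPlane ∧ (1 + S0 f z)/2 ∈ Complex.slitPlane ∧
      (1 + S1 f z)/2 ∈ Complex.slitPlane ∧ (1 + S2 f z)/2 ∈ Complex.slitPlane ∧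
      GG f z ∈ Complex.slitPlane ∧
      (16 * (1 + S0 f z) * (1 + S1 f z) * (1 + S2 f z) : ℂ) ≠ 0 := by
  obtain ⟨b0, b1, b2, b3, bq⟩ := bounds h
  have n2 : ‖(2:ℂ)‖ = 2 := by norm_num
  refine ⟨?_, ?_, ?_, ?_, ?_, ?_⟩
  · apply mem_slitPlane_of_near_one
    rw [show (f z + 1)/2 - 1 = (f z - 1)/2 from by ring, norm_div, n2]; linarith
  · apply mem_slitPlane_of_near_one
    rw [show (1 + S0 f z)/2 - 1 = (S0 f z - 1)/2 from by ring, norm_div, n2]; linarith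
  · apply mem_slitPlane_of_near_one
    rw [show (1 + S1 f z)/2 - 1 = (S1 f z - 1)/2 from by ring, norm_div, n2]; linarith
  · apply mem_slitPlane_of_near_one
    rw [show (1 + S2 f z)/2 - 1 = (S2 f z - 1)/2 from by ring, norm_div, n2]; linarith
  · exact mem_slitPlane_of_near_one (by linarith [norm_GG_sub_one h])
  · have hA : (1 + S0 f z) ≠ 0 := by
      intro h0; have := norm_two_sub b0; rw [h0] at this; simp at this; linarith
    have hB : (1 + S1 f z) ≠ 0 := by
      intro h0; have := norm_two_sub b1; rw [h0] at this; simp at this; linarith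
    have hC : (1 + S2 f z) ≠ 0 := by
      intro h0; have := norm_two_sub b2; rw [h0] at this; simp at this; linarith
    simp [hA, hB, hC]

end SubAux

open Filter Topology
open Filter Topology in
private lemma _dummy_open : True := trivial

lemma coshSqrt_pow (t : ℂ) : coshSqrt (t^2) = Complex.cosh t := by
  simp only [coshSqrt]
  exact SubAux.coshSqrt_sq' t

lemma coshSqrt_zero : coshSqrt 0 = 1 := by
  calc coshSqrt 0 = coshSqrt (0^2) := by norm_num
    _ = Complex.cosh 0 := coshSqrt_pow 0
    _ = 1 := Complex.cosh_zero

open SubAux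

theorem subordination_of_deriv_sq_bound (p : ℂ → ℂ)
    (hp : AnalyticOn ℂ p (ball (0:ℂ) 1)) (hp0 : p 0 = 1)
    (hpne : ∀ z ∈ ball (0:ℂ) 1, p z ≠ 0)
    (hb : ∀ z ∈ ball (0:ℂ) 1, ‖z * deriv p z / (p z) ^ 2‖ < Real.sinh 1 / (2 * Real.cosh 1 ^ 2)) :
    Subordinate p coshSqrt := by
  classical
  set c : ℝ := Real.sinh 1 / (2 * Real.cosh 1 ^ 2) with hc
  have hc4 : c ≤ 1/4 := by
    rw [hc, div_le_iff₀ (by positivity)]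
    nlinarith [Real.cosh_sq 1, sq_nonneg (Real.sinh 1 - 1)]
  have hopen : IsOpen (ball (0:ℂ) 1) := isOpen_ball
  have h01 : (0:ℂ) ∈ ball (0:ℂ) 1 := mem_ball_self one_pos
  have hpN : AnalyticOnNhd ℂ p (ball (0:ℂ) 1) := (hopen.analyticOn_iff_analyticOnNhd).mp hp
  have hdp : ∀ z ∈ ball (0:ℂ) 1, DifferentiableAt ℂ p z := fun z hz => (hpN z hz).differentiableAt
  have hderN : AnalyticOnNhd ℂ (deriv p) (ball (0:ℂ) 1) := hpN.deriv_of_isOpen hopen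
  set ψ : ℂ → ℂ := fun z => z * deriv p z / p z ^ 2 with hψ
  have hψd : DifferentiableOn ℂ ψ (ball (0:ℂ) 1) := by
    intro z hz
    apply DifferentiableAt.differentiableWithinAt
    exact (differentiableAt_id.mul (hderN z hz).differentiableAt).div
      (((hpN z hz).differentiableAt).pow 2) (pow_ne_zero 2 (hpne z hz))
  have hψ0 : ψ 0 = 0 := by simp [hψ]
  have hmaps : Set.MapsTo ψ (ball (0:ℂ) 1) (ball (ψ 0) c) := by
    intro z hz
    rw [hψ0, mem_ball, dist_zero_right]
    exact hb z hz
  have hdsl : ∀ z ∈ ball (0:ℂ) 1, ‖dslope ψ 0 z‖ ≤ c := by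
    intro z hz
    have := Complex.norm_dslope_le_div_of_mapsTo_ball hψd (hmaps.mono_right ball_subset_closedBall) hz
    simpa using this
  have hQb : ∀ z ∈ ball (0:ℂ) 1, ‖deriv p z / p z ^ 2‖ ≤ c := by
    intro z hz
    rcases eq_or_ne z 0 with rfl | hz0
    · have hD : DifferentiableAt ℂ (fun w => deriv p w / p w ^ 2) 0 :=
        (hderN 0 h01).differentiableAt.div ((hpN 0 h01).differentiableAt.pow 2)
          (pow_ne_zero 2 (hpne 0 h01))
      have h1 : HasDerivAt (fun w : ℂ => w * (deriv p w / p w ^ 2))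
          (1 * (deriv p 0 / p 0 ^ 2) + 0 * deriv (fun w => deriv p w / p w ^ 2) 0) 0 :=
        (hasDerivAt_id 0).mul hD.hasDerivAt
      have h2 : ψ = fun w : ℂ => w * (deriv p w / p w ^ 2) := by
        funext w; simp only [hψ]; ring
      rw [← h2] at h1
      have hψder : HasDerivAt ψ (deriv p 0 / p 0 ^ 2) 0 := by
        simpa using h1
      have := hdsl 0 h01
      rw [dslope_same, hψder.deriv] at this
      exact this
    · have := hdsl z hz
      rw [dslope_of_ne ψ hz0, slope_def_field, hψ0, sub_zero, sub_zero] at this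
      have hzz : ψ z / z = deriv p z / p z ^ 2 := by
        have hψz : ψ z = z * (deriv p z / p z ^ 2) := by simp only [hψ]; ring
        rw [hψz, mul_comm, mul_div_assoc, div_self hz0, mul_one]
      rwa [hzz] at this
  have h14 : ∀ z ∈ ball (0:ℂ) 1, ‖(p z)⁻¹ - 1‖ ≤ 1/4 := by
    intro z hz
    rw [mem_ball, dist_zero_right] at hz
    have hzmem : ∀ t : ℝ, t ∈ Set.Icc (0:ℝ) 1 → (t:ℂ) * z ∈ ball (0:ℂ) 1 := by
      intro t ht
      rw [mem_ball, dist_zero_right, norm_mul, Complex.norm_real, Real.norm_eq_abs,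
        _root_.abs_of_nonneg ht.1]
      nlinarith [ht.2, norm_nonneg z]
    set F : ℝ → ℂ := fun t => (p ((t:ℂ) * z))⁻¹ with hF
    have hFderiv : ∀ t ∈ Set.Icc (0:ℝ) 1,
        HasDerivWithinAt F (-deriv p ((t:ℂ)*z) / p ((t:ℂ)*z) ^ 2 * z) (Set.Icc (0:ℝ) 1) t := by
      intro t ht
      have hmem := hzmem t ht
      have hinner : HasDerivAt (fun w : ℂ => w * z) z (t:ℂ) := by
        simpa using (hasDerivAt_id ((t:ℂ))).mul_const z
      have hpder : HasDerivAt (fun w : ℂ => (p w)⁻¹)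
          (-deriv p ((t:ℂ)*z) / p ((t:ℂ)*z) ^ 2) ((t:ℂ)*z) :=
        ((hdp _ hmem).hasDerivAt).inv (hpne _ hmem)
      exact ((hpder.comp (t:ℂ) hinner).comp_ofReal).hasDerivWithinAt
    have hbound : ∀ t ∈ Set.Ico (0:ℝ) 1,
        ‖-deriv p ((t:ℂ)*z) / p ((t:ℂ)*z) ^ 2 * z‖ ≤ c := by
      intro t ht
      have hmem := hzmem t ⟨ht.1, ht.2.le⟩
      have h1 := hQb _ hmem
      rw [norm_mul, neg_div, norm_neg]
      have hc0 : (0:ℝ) ≤ c := le_trans (norm_nonneg _) h1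
      nlinarith [norm_nonneg (deriv p ((t:ℂ)*z) / p ((t:ℂ)*z) ^ 2), norm_nonneg z]
    have hFTC := norm_image_sub_le_of_norm_deriv_le_segment' hFderiv hbound 1
      (Set.right_mem_Icc.mpr zero_le_one)
    have hF1 : F 1 = (p z)⁻¹ := by simp only [hF]; norm_num
    have hF0 : F 0 = 1 := by simp only [hF]; norm_num [hp0]
    rw [hF1, hF0] at hFTC
    calc ‖(p z)⁻¹ - 1‖ ≤ c * (1 - 0) := hFTC
      _ ≤ 1/4 := by linarith
  have h13 : ∀ z ∈ ball (0:ℂ) 1, ‖p z - 1‖ ≤ 1/3 := by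
    intro z hz
    have h1 := h14 z hz
    have hpz := hpne z hz
    have hinv : (3:ℝ)/4 ≤ ‖(p z)⁻¹‖ := by
      have h2 := norm_sub_norm_le (1:ℂ) ((p z)⁻¹)
      have h3 : ‖(1:ℂ) - (p z)⁻¹‖ = ‖(p z)⁻¹ - 1‖ := norm_sub_rev _ _
      rw [h3, norm_one] at h2
      linarith
    have hppos : (0:ℝ) < ‖p z‖ := norm_pos_iff.mpr hpz
    have hnp : ‖p z‖ ≤ 4/3 := by
      rw [norm_inv] at hinv
      have h5 : ‖p z‖⁻¹ * ‖p z‖ = 1 := inv_mul_cancel₀ (ne_of_gt hppos)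
      nlinarith [hinv, hppos]
    have hfac : p z - 1 = p z * ((p z)⁻¹ - 1) * (-1) := by
      field_simp
      ring
    rw [hfac, norm_mul, norm_mul, norm_neg, norm_one, mul_one]
    nlinarith [norm_nonneg (p z)]
  by_cases hone : ∀ z ∈ ball (0:ℂ) 1, p z = 1
  · refine ⟨fun _ => 0, analyticOn_const, rfl, ?_, ?_⟩
    · intro z _
      exact h01
    · intro z hz
      rw [hone z hz, coshSqrt_zero]
  · push_neg at hone
    obtain ⟨z₁, hz₁mem, hz₁⟩ := hone
    -- differentiability of chain components
    have hS0d : ∀ w ∈ ball (0:ℂ) 1, DifferentiableAt ℂ (S0 p) w := by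
      intro w hw
      exact diffAt_sq2 (((hdp w hw).add_const 1).div_const 2) (slit_facts (h13 w hw)).1
    have hS1d : ∀ w ∈ ball (0:ℂ) 1, DifferentiableAt ℂ (S1 p) w := by
      intro w hw
      exact diffAt_sq2 (((hS0d w hw).const_add 1).div_const 2) (slit_facts (h13 w hw)).2.1
    have hS2d : ∀ w ∈ ball (0:ℂ) 1, DifferentiableAt ℂ (S2 p) w := by
      intro w hw
      exact diffAt_sq2 (((hS1d w hw).const_add 1).div_const 2) (slit_facts (h13 w hw)).2.2.1
    have hS3d : ∀ w ∈ ball (0:ℂ) 1, DifferentiableAt ℂ (S3 p) w := by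
      intro w hw
      exact diffAt_sq2 (((hS2d w hw).const_add 1).div_const 2) (slit_facts (h13 w hw)).2.2.2.1
    have hQd : ∀ w ∈ ball (0:ℂ) 1, DifferentiableAt ℂ (QQ p) w := by
      intro w hw
      have hden : DifferentiableAt ℂ
          (fun u => 16 * (1 + S0 p u) * (1 + S1 p u) * (1 + S2 p u)) w :=
        ((((differentiableAt_const (16:ℂ)).mul ((hS0d w hw).const_add 1)).mul
          ((hS1d w hw).const_add 1)).mul ((hS2d w hw).const_add 1))
      exact ((hdp w hw).sub_const 1).div hden (slit_facts (h13 w hw)).2.2.2.2.2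
    have hgood : ∀ w ∈ ball (0:ℂ) 1, QQ p w ≠ 0 → DifferentiableAt ℂ (WW p) w := by
      intro w hw hq
      by_cases hslit : QQ p w ∈ Complex.slitPlane
      · have h1 : DifferentiableAt ℂ (fun u => sq2 (QQ p u)) w := diffAt_sq2 (hQd w hw) hslit
        have hsum : DifferentiableAt ℂ (fun u => sq2 (QQ p u) + S3 p u) w :=
          h1.add (hS3d w hw)
        have heqG : sq2 (QQ p w) + S3 p w = GG p w := by
          simp only [GG, sqv, if_neg hq]
        have hmem : (fun u => sq2 (QQ p u) + S3 p u) w ∈ Complex.slitPlane := by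
          simp only []
          rw [heqG]
          exact (slit_facts (h13 w hw)).2.2.2.2.1
        have hWPd : DifferentiableAt ℂ
            (fun u => (16 * Complex.log (sq2 (QQ p u) + S3 p u))^2) w :=
          (((Complex.differentiableAt_log hmem).comp w hsum).const_mul 16).pow 2
        have hU : {u | QQ p u ≠ 0} ∈ 𝓝 w :=
          (hQd w hw).continuousAt.preimage_mem_nhds (compl_singleton_mem_nhds hq)
        have hEq : WW p =ᶠ[𝓝 w] fun u => (16 * Complex.log (sq2 (QQ p u) + S3 p u))^2 := by
          filter_upwards [hU] with u hu
          simp only [WW, GG, sqv, if_neg hu]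
        exact hEq.differentiableAt_iff.mpr hWPd
      · have hnslit : -QQ p w ∈ Complex.slitPlane := neg_mem_slitPlane hq hslit
        have h1 : DifferentiableAt ℂ (fun u => sq2 (-QQ p u)) w :=
          diffAt_sq2 (hQd w hw).neg hnslit
        have h2 : DifferentiableAt ℂ (fun u => Complex.I * sq2 (-QQ p u) + S3 p u) w :=
          (h1.const_mul _).add (hS3d w hw)
        have hmem : (fun u => Complex.I * sq2 (-QQ p u) + S3 p u) w ∈ Complex.slitPlane := by
          simp only []
          have : Complex.I * sq2 (-QQ p w) + S3 p w = GM p w := rfl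
          rw [this]
          exact mem_slitPlane_of_near_one (by linarith [norm_GM_sub_one (h13 w hw) hq])
        have hWMd : DifferentiableAt ℂ (WM p) w :=
          (((Complex.differentiableAt_log hmem).comp w h2).const_mul 16).pow 2
        have hU : {u | QQ p u ≠ 0} ∈ 𝓝 w :=
          (hQd w hw).continuousAt.preimage_mem_nhds (compl_singleton_mem_nhds hq)
        have hEq : WW p =ᶠ[𝓝 w] WM p := by
          filter_upwards [hU, hopen.eventually_mem hw] with u hu humem
          exact ww_eq_wm (h13 u humem) hu
        exact hEq.differentiableAt_iff.mpr hWMd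
    have hWd : ∀ w ∈ ball (0:ℂ) 1, DifferentiableAt ℂ (WW p) w := by
      intro w hw
      by_cases hq : QQ p w ≠ 0
      · exact hgood w hw hq
      push_neg at hq
      have hone' : ∀ᶠ u in 𝓝[≠] w, p u ≠ 1 := by
        rcases (hpN w hw).eventually_eq_or_eventually_ne
            (analyticAt_const : AnalyticAt ℂ (fun _ => (1:ℂ)) w) with hcase | hcase
        · exfalso
          have heq : Set.EqOn p (fun _ => (1:ℂ)) (ball (0:ℂ) 1) :=
            hpN.eqOn_of_preconnected_of_eventuallyEq analyticOnNhd_const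
              (convex_ball (0:ℂ) 1).isPreconnected hw hcase
          exact hz₁ (heq hz₁mem)
        · exact hcase
      have hball : ∀ᶠ u in 𝓝[≠] w, u ∈ ball (0:ℂ) 1 :=
        eventually_nhdsWithin_of_eventually_nhds (hopen.eventually_mem hw)
      have hpd : ∀ᶠ u in 𝓝[≠] w, DifferentiableAt ℂ (WW p) u := by
        filter_upwards [hone', hball] with u hu1 hu2
        apply hgood u hu2
        rw [QQ]
        exact div_ne_zero (sub_ne_zero.mpr hu1) (slit_facts (h13 u hu2)).2.2.2.2.2
      have hxc : ContinuousAt (fun u => sqv (QQ p u)) w := by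
        have h0 : sqv (QQ p w) = 0 := by rw [hq]; simp [sqv]
        rw [ContinuousAt, h0, tendsto_zero_iff_norm_tendsto_zero]
        have heq2 : (fun u => ‖sqv (QQ p u)‖) = fun u => Real.sqrt ‖QQ p u‖ := by
          funext u; exact norm_sqv _
        rw [heq2]
        have ht : Filter.Tendsto (fun u => Real.sqrt ‖QQ p u‖) (𝓝 w)
            (𝓝 (Real.sqrt ‖QQ p w‖)) :=
          (Real.continuous_sqrt.continuousAt).comp ((hQd w hw).continuousAt.norm)
        rwa [hq, norm_zero, Real.sqrt_zero] at ht
      have hgc : ContinuousAt (GG p) w := hxc.add (hS3d w hw).continuousAt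
      have hmem : GG p w ∈ Complex.slitPlane := (slit_facts (h13 w hw)).2.2.2.2.1
      have hlc : ContinuousAt (fun u => Complex.log (GG p u)) w :=
        (continuousAt_clog hmem).comp hgc
      have hcont : ContinuousAt (WW p) w := (continuousAt_const.mul hlc).pow 2
      exact (Complex.analyticAt_of_differentiable_on_punctured_nhds_of_continuousAt
        hpd hcont).differentiableAt
    have hWanalytic : AnalyticOn ℂ (WW p) (ball (0:ℂ) 1) := by
      have : DifferentiableOn ℂ (WW p) (ball (0:ℂ) 1) :=
        fun z hz => (hWd z hz).differentiableWithinAt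
      exact (this.analyticOnNhd hopen).analyticOn
    refine ⟨WW p, hWanalytic, ?_, ?_, ?_⟩
    · have hQ0 : QQ p 0 = 0 := by
        rw [QQ, hp0]
        simp
      have hS00 : S0 p 0 = 1 := by
        rw [S0, hp0]
        norm_num [sq2_one]
      have hS10 : S1 p 0 = 1 := by
        rw [S1, hS00]
        norm_num [sq2_one]
      have hS20 : S2 p 0 = 1 := by
        rw [S2, hS10]
        norm_num [sq2_one]
      have hS30 : S3 p 0 = 1 := by
        rw [S3, hS20]
        norm_num [sq2_one]
      rw [WW, GG, hQ0, hS30]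
      simp [sqv, Complex.log_one]
    · intro z hz
      exact mem_ball_WW (h13 z hz)
    · intro z hz
      calc p z = Complex.cosh (16 * Complex.log (GG p z)) := (identity_eq (h13 z hz)).symm
        _ = coshSqrt (WW p z) := by
            rw [WW]
            exact (coshSqrt_pow _).symm
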